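/- The increments b ↦ γ_{b+1} - γ_b are nondecreasing in b for b ≥ 2, and consequently γ_b ≥ (γ_3 - γ_2)(b - 2) for every integer b ≥ 2. -/

import Mathlib

open MeasureTheory Finset Filter

/-- `lamBK μ b k` is `λ_{b,k} = ∫_{[0,1]} x^{k-2} (1-x)^{b-k} dΛ(x)`. -/
noncomputable def lamBK (μ : Measure ℝ) (b k : ℕ) : ℝ :=
  ∫ x in Set.Icc (0:ℝ) 1, x ^ (k - 2) * (1 - x) ^ (b - k) ∂μ

/-- `lamB μ b` is `λ_b = Σ_{k=2}^b C(b,k) λ_{b,k}`. -/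
noncomputable def lamB (μ : Measure ℝ) (b : ℕ) : ℝ :=
  ∑ k ∈ Finset.Icc 2 b, (b.choose k : ℝ) * lamBK μ b k

/-- `gamB μ b` is `γ_b = Σ_{k=2}^b C(b,k) (k-1) λ_{b,k}`. -/
noncomputable def gamB (μ : Measure ℝ) (b : ℕ) : ℝ :=
  ∑ k ∈ Finset.Icc 2 b, (b.choose k : ℝ) * ((k : ℝ) - 1) * lamBK μ b k

/-- The integrand of `gamB` as a single function. -/
noncomputable def Ffun (b : ℕ) (x : ℝ) : ℝ :=
  ∑ k ∈ Finset.Icc 2 b, (b.choose k : ℝ) * ((k : ℝ) - 1) * (x ^ (k - 2) * (1 - x) ^ (b - k))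

/-- The increment integrand: a geometric sum. -/
noncomputable def Dfun (b : ℕ) (x : ℝ) : ℝ := ∑ j ∈ Finset.range b, (1 - x) ^ j

lemma sum_one (n : ℕ) (x : ℝ) :
    ∑ k ∈ Finset.range (n + 1), x ^ k * (1 - x) ^ (n - k) * (n.choose k : ℝ) = 1 := by
  have h := add_pow x (1 - x) n
  rw [show x + (1 - x) = 1 by ring, one_pow] at h
  exact h.symm

lemma sum_k (n : ℕ) (x : ℝ) :
    ∑ k ∈ Finset.range (n + 1), (k : ℝ) * (n.choose k : ℝ) * x ^ k * (1 - x) ^ (n - k)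
      = n * x := by
  cases n with
  | zero => simp
  | succ m =>
    rw [Finset.sum_range_succ']
    simp only [Nat.cast_zero, zero_mul, add_zero]
    have hrw : ∀ i ∈ Finset.range (m + 1),
        ((i + 1 : ℕ) : ℝ) * ((m + 1).choose (i + 1) : ℝ) * x ^ (i + 1) * (1 - x) ^ (m + 1 - (i + 1))
          = ((m + 1 : ℕ) : ℝ) * x * (x ^ i * (1 - x) ^ (m - i) * (m.choose i : ℝ)) := by
      intro i _
      have h := Nat.add_one_mul_choose_eq m i
      have h' : ((m + 1 : ℕ) : ℝ) * (m.choose i : ℝ)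
          = ((m + 1).choose (i + 1) : ℝ) * ((i + 1 : ℕ) : ℝ) := by
        exact_mod_cast congrArg (fun t : ℕ => (t : ℝ)) h
      have hsub : m + 1 - (i + 1) = m - i := by omega
      rw [hsub, pow_succ]
      push_cast at h' ⊢
      linear_combination (x ^ i * x * (1 - x) ^ (m - i)) * h'.symm
    rw [Finset.sum_congr rfl hrw, ← Finset.mul_sum, sum_one m x, mul_one]

lemma sum_km1 (n : ℕ) (x : ℝ) :
    ∑ k ∈ Finset.range (n + 1), ((k : ℝ) - 1) * (n.choose k : ℝ) * x ^ k * (1 - x) ^ (n - k)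
      = n * x - 1 := by
  have h1 := sum_k n x
  have h2 := sum_one n x
  calc ∑ k ∈ Finset.range (n + 1), ((k : ℝ) - 1) * (n.choose k : ℝ) * x ^ k * (1 - x) ^ (n - k)
      = ∑ k ∈ Finset.range (n + 1), ((k : ℝ) * (n.choose k : ℝ) * x ^ k * (1 - x) ^ (n - k)
          - x ^ k * (1 - x) ^ (n - k) * (n.choose k : ℝ)) := by
        apply Finset.sum_congr rfl; intro k _; ring
    _ = n * x - 1 := by rw [Finset.sum_sub_distrib, h1, h2]

lemma key (m : ℕ) (x : ℝ) :
    x ^ 2 * Ffun (m + 2) x = ((m : ℝ) + 2) * x - 1 + (1 - x) ^ (m + 2) := by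
  have hfull := sum_km1 (m + 2) x
  rw [show m + 2 + 1 = (m + 1) + 1 + 1 from rfl] at hfull
  rw [Finset.sum_range_succ', Finset.sum_range_succ'] at hfull
  have hstep : ∀ i ∈ Finset.range (m + 1),
      ((↑(i + 1 + 1) : ℝ) - 1) * ((m + 2).choose (i + 1 + 1) : ℝ) * x ^ (i + 1 + 1)
          * (1 - x) ^ (m + 2 - (i + 1 + 1))
        = x ^ 2 * (((m + 2).choose (2 + i) : ℝ) * (((2 + i : ℕ) : ℝ) - 1)
            * (x ^ i * (1 - x) ^ (m - i))) := by
    intro i _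
    have e1 : i + 1 + 1 = 2 + i := by omega
    have e2 : m + 2 - (i + 1 + 1) = m - i := by omega
    rw [e2, e1]
    push_cast
    ring
  rw [Finset.sum_congr rfl hstep, ← Finset.mul_sum] at hfull
  have hF : Ffun (m + 2) x
      = ∑ i ∈ Finset.range (m + 1),
          ((m + 2).choose (2 + i) : ℝ) * (((2 + i : ℕ) : ℝ) - 1) * (x ^ i * (1 - x) ^ (m - i)) := by
    unfold Ffun
    rw [← Finset.Ico_add_one_right_eq_Icc, Finset.sum_Ico_eq_sum_range]
    have hr : m + 2 + 1 - 2 = m + 1 := by omega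
    rw [hr]
    refine Finset.sum_congr rfl ?_
    intro i _
    have e1 : 2 + i - 2 = i := by omega
    have e2 : m + 2 - (2 + i) = m - i := by omega
    rw [e1, e2]
  rw [hF]
  norm_num at hfull
  push_cast at hfull ⊢
  linarith [hfull]

lemma xD (b : ℕ) (x : ℝ) : x * Dfun b x = 1 - (1 - x) ^ b := by
  have h := geom_sum_mul (1 - x) b
  unfold Dfun
  linear_combination -h

lemma Ffun_diff (b : ℕ) (hb : 2 ≤ b) (x : ℝ) (hx : x ≠ 0) :
    Ffun (b + 1) x - Ffun b x = Dfun b x := by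
  obtain ⟨m, rfl⟩ : ∃ m, b = m + 2 := ⟨b - 2, by omega⟩
  have h1 := key m x
  have h2 := key (m + 1) x
  rw [show m + 1 + 2 = m + 2 + 1 from rfl] at h2
  have hD := xD (m + 2) x
  have hsq : x ^ 2 * (Ffun (m + 2 + 1) x - Ffun (m + 2) x) = x ^ 2 * Dfun (m + 2) x := by
    push_cast at h1 h2
    linear_combination h2 - h1 - x * hD
  exact mul_left_cancel₀ (pow_ne_zero 2 hx) hsq

lemma Dfun_mono (b : ℕ) {x : ℝ} (hx : x ≤ 1) : Dfun b x ≤ Dfun (b + 1) x := by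
  unfold Dfun
  rw [Finset.sum_range_succ]
  have := pow_nonneg (by linarith : (0:ℝ) ≤ 1 - x) b
  linarith

lemma cont_Ffun (b : ℕ) : Continuous (Ffun b) := by
  unfold Ffun
  exact continuous_finset_sum _ fun k _ => by fun_prop

lemma cont_Dfun (b : ℕ) : Continuous (Dfun b) := by
  unfold Dfun
  exact continuous_finset_sum _ fun k _ => by fun_prop

lemma gamB_eq (μ : Measure ℝ) [IsFiniteMeasure μ] (b : ℕ) :
    gamB μ b = ∫ x in Set.Icc (0:ℝ) 1, Ffun b x ∂μ := by
  unfold gamB Ffun lamBK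
  rw [MeasureTheory.integral_finset_sum _
    (fun k _ => (Continuous.integrableOn_Icc (by fun_prop)))]
  exact Finset.sum_congr rfl fun k _ => (MeasureTheory.integral_const_mul _ _).symm

lemma gamB_incr (μ : Measure ℝ) [IsFiniteMeasure μ] (h0 : μ {0} = 0) (b : ℕ) (hb : 2 ≤ b) :
    gamB μ (b + 1) - gamB μ b = ∫ x in Set.Icc (0:ℝ) 1, Dfun b x ∂μ := by
  rw [gamB_eq, gamB_eq,
    ← MeasureTheory.integral_sub ((cont_Ffun (b + 1)).integrableOn_Icc)
      ((cont_Ffun b).integrableOn_Icc)]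
  refine MeasureTheory.integral_congr_ae ?_
  have hz : ∀ᵐ x ∂(μ.restrict (Set.Icc (0:ℝ) 1)), x ≠ 0 := by
    refine (MeasureTheory.ae_iff).mpr ?_
    have hs : {x : ℝ | ¬ x ≠ 0} = {0} := by ext y; simp
    rw [hs, MeasureTheory.Measure.restrict_apply (measurableSet_singleton 0)]
    exact le_antisymm (le_trans (measure_mono Set.inter_subset_left) h0.le) (zero_le)
  filter_upwards [hz] with x hx
  exact Ffun_diff b hb x hx

theorem gamB_increments_mono_and_lower_bound (μ : Measure ℝ) [IsFiniteMeasure μ]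
    (h0 : μ {0} = 0) (h1 : μ {1} = 0)
    (hsupp : μ ((Set.Icc (0:ℝ) 1)ᶜ) = 0) (hpos : 0 < μ (Set.Icc (0:ℝ) 1)) :
    (∀ b : ℕ, 2 ≤ b →
        gamB μ (b + 1) - gamB μ b ≤ gamB μ (b + 2) - gamB μ (b + 1)) ∧
      (∀ b : ℕ, 2 ≤ b → (gamB μ 3 - gamB μ 2) * ((b : ℝ) - 2) ≤ gamB μ b) := by
  have part1 : ∀ b : ℕ, 2 ≤ b →
      gamB μ (b + 1) - gamB μ b ≤ gamB μ (b + 2) - gamB μ (b + 1) := by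
    intro b hb
    rw [gamB_incr μ h0 b hb, show b + 2 = (b + 1) + 1 from rfl,
      gamB_incr μ h0 (b + 1) (by omega)]
    refine MeasureTheory.setIntegral_mono_on ((cont_Dfun b).integrableOn_Icc)
      ((cont_Dfun (b + 1)).integrableOn_Icc) measurableSet_Icc ?_
    intro x hx
    exact Dfun_mono b hx.2
  refine ⟨part1, ?_⟩
  have gam2 : 0 ≤ gamB μ 2 := by
    unfold gamB
    rw [Finset.Icc_self, Finset.sum_singleton]
    have hl : 0 ≤ lamBK μ 2 2 := by
      unfold lamBK
      refine MeasureTheory.setIntegral_nonneg measurableSet_Icc fun x hx => ?_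
      norm_num
    norm_num
    linarith
  have hstep : ∀ b : ℕ, 2 ≤ b → gamB μ 3 - gamB μ 2 ≤ gamB μ (b + 1) - gamB μ b := by
    intro b hb
    induction b, hb using Nat.le_induction with
    | base => norm_num
    | succ b hb ih => exact le_trans ih (part1 b hb)
  intro b hb
  induction b, hb using Nat.le_induction with
  | base => norm_num; linarith
  | succ b hb ih =>
    have h1 := hstep b hb
    have hexp : (gamB μ 3 - gamB μ 2) * (((b : ℝ) + 1) - 2)
        = (gamB μ 3 - gamB μ 2) * ((b : ℝ) - 2) + (gamB μ 3 - gamB μ 2) := by ring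
    push_cast
    rw [hexp]
    linarith
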